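/- Linear convergence under the projected PL inequality: Let C be nonempty closed convex, f differentiable with L-Lipschitz gradient, α ∈ (0, 1/L], and suppose f satisfies the projected PL inequality ‖G_α(x)‖² ≥ κ (f(x) - f*) on C for some κ > 0, where f* = min_{x ∈ C} f(x). Then the iterates x_{k+1} = Π_C(x_k - α∇f(x_k)) satisfy f(x_k) - f* ≤ (1 - α(1 - αL/2)κ)^k (f(x_0) - f*). -/

import Mathlib

open scoped RealInnerProductSpace

/-- Descent lemma. -/
lemma descent_lemma {d : ℕ}
    (f : EuclideanSpace ℝ (Fin d) → ℝ) (g : EuclideanSpace ℝ (Fin d) → EuclideanSpace ℝ (Fin d))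
    (hdiff : ∀ x, HasGradientAt f (g x) x)
    (L : ℝ) (hLip : ∀ x y, ‖g x - g y‖ ≤ L * ‖x - y‖)
    (x y : EuclideanSpace ℝ (Fin d)) :
    f y ≤ f x + ⟪g x, y - x⟫ + L / 2 * ‖y - x‖ ^ 2 := by
  set v := y - x with hv
  have hline : ∀ t : ℝ, HasDerivAt (fun t : ℝ => f (x + t • v)) ⟪g (x + t • v), v⟫ t := by
    intro t
    have h1 : HasDerivAt (fun t : ℝ => x + t • v) v t := by
      simpa using ((hasDerivAt_id t).smul_const v).const_add x
    have h2 := (hasGradientAt_iff_hasFDerivAt.mp (hdiff (x + t • v))).comp_hasDerivAt t h1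
    simp at h2; exact h2
  set h : ℝ → ℝ := fun t => f x + t * ⟪g x, v⟫ + L / 2 * t ^ 2 * ‖v‖ ^ 2 - f (x + t • v) with hh
  have hh' : ∀ t : ℝ, HasDerivAt h (⟪g x, v⟫ + L * t * ‖v‖ ^ 2 - ⟪g (x + t • v), v⟫) t := by
    intro t
    have hpoly : HasDerivAt (fun t : ℝ => f x + t * ⟪g x, v⟫ + L / 2 * t ^ 2 * ‖v‖ ^ 2)
        (⟪g x, v⟫ + L * t * ‖v‖ ^ 2) t := by
      have : HasDerivAt (fun t : ℝ => f x + t * ⟪g x, v⟫ + L / 2 * t ^ 2 * ‖v‖ ^ 2)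
          (0 + 1 * ⟪g x, v⟫ + L / 2 * ((2:ℕ) * t ^ (2-1)) * ‖v‖ ^ 2) t := by
        exact (((hasDerivAt_const t (f x)).add ((hasDerivAt_id t).mul_const _)).add
          (((hasDerivAt_pow 2 t).const_mul (L / 2)).mul_const _))
      convert this using 1; push_cast; ring
    exact hpoly.sub (hline t)
  have hdiffh : Differentiable ℝ h := fun t => (hh' t).differentiableAt
  have hmono : MonotoneOn h (Set.Icc (0:ℝ) 1) := by
    apply monotoneOn_of_deriv_nonneg (convex_Icc 0 1) hdiffh.continuous.continuousOn
      (hdiffh.differentiableOn)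
    intro t ht
    rw [interior_Icc] at ht
    rw [(hh' t).deriv]
    have hb : ⟪g (x + t • v) - g x, v⟫ ≤ L * t * ‖v‖ ^ 2 := by
      calc ⟪g (x + t • v) - g x, v⟫ ≤ ‖g (x + t • v) - g x‖ * ‖v‖ := real_inner_le_norm _ _
        _ ≤ (L * ‖(x + t • v) - x‖) * ‖v‖ := by
            gcongr; exact hLip _ _
        _ = L * t * ‖v‖ ^ 2 := by
            rw [add_sub_cancel_left, norm_smul, Real.norm_eq_abs, abs_of_pos ht.1]; ring
    have : ⟪g (x + t • v), v⟫ - ⟪g x, v⟫ ≤ L * t * ‖v‖ ^ 2 := by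
      rw [← inner_sub_left]; exact hb
    linarith
  have h01 : h 0 ≤ h 1 := hmono (by norm_num) (by norm_num) zero_le_one
  have h0 : h 0 = 0 := by simp [hh]
  have h1 : h 1 = f x + ⟪g x, v⟫ + L / 2 * ‖v‖ ^ 2 - f y := by
    simp [hh, hv]
  rw [h0, h1] at h01
  linarith

/-- Linear convergence of projected gradient descent under the projected PL inequality:
if `‖G_α(x)‖² ≥ κ (f x - fstar)` on `C`, then the iterates
`x_{k+1} = Π_C(x_k - α ∇f(x_k))` satisfy
`f(x_k) - fstar ≤ (1 - α(1 - αL/2)κ)^k (f(x_0) - fstar)`. -/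
theorem linear_convergence_projected_pl
    {d : ℕ} (C : Set (EuclideanSpace ℝ (Fin d)))
    (hC : C.Nonempty) (hclosed : IsClosed C) (hconv : Convex ℝ C)
    (proj : EuclideanSpace ℝ (Fin d) → EuclideanSpace ℝ (Fin d))
    (hproj : ∀ y, proj y ∈ C ∧ ∀ z ∈ C, ‖y - proj y‖ ≤ ‖y - z‖)
    (f : EuclideanSpace ℝ (Fin d) → ℝ) (g : EuclideanSpace ℝ (Fin d) → EuclideanSpace ℝ (Fin d))
    (hdiff : ∀ x, HasGradientAt f (g x) x)
    (L : ℝ) (hL : 0 < L) (hLip : ∀ x y, ‖g x - g y‖ ≤ L * ‖x - y‖)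
    (α : ℝ) (hα : 0 < α) (hαL : α ≤ 1 / L)
    (fstar : ℝ) (hlb : ∀ y ∈ C, fstar ≤ f y) (hatt : ∃ y ∈ C, f y = fstar)
    (κ : ℝ) (hκ : 0 < κ)
    (hPL : ∀ y ∈ C, ‖α⁻¹ • (y - proj (y - α • g y))‖ ^ 2 ≥ κ * (f y - fstar))
    (x : ℕ → EuclideanSpace ℝ (Fin d)) (hx0 : x 0 ∈ C)
    (hiter : ∀ k, x (k + 1) = proj (x k - α • g (x k))) :
    ∀ k : ℕ, f (x k) - fstar ≤ (1 - α * (1 - α * L / 2) * κ) ^ k * (f (x 0) - fstar) := by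
  set r : ℝ := 1 - α * (1 - α * L / 2) * κ with hr
  -- variational inequality for the projection
  have hVI : ∀ u, ∀ z ∈ C, ⟪u - proj u, z - proj u⟫ ≤ 0 := by
    intro u
    have heq : ‖u - proj u‖ = ⨅ w : C, ‖u - (w : EuclideanSpace ℝ (Fin d))‖ := by
      haveI : Nonempty C := hC.to_subtype
      refine le_antisymm (le_ciInf fun w => (hproj u).2 w w.2) ?_
      refine ciInf_le ⟨0, ?_⟩ (⟨proj u, (hproj u).1⟩ : C)
      rintro b ⟨w, rfl⟩; positivity
    exact (norm_eq_iInf_iff_real_inner_le_zero hconv (hproj u).1).mp heq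
  -- key one-step inequality
  have key : ∀ y ∈ C, f (proj (y - α • g y)) - fstar ≤ r * (f y - fstar) := by
    intro y hy
    set p := proj (y - α • g y) with hp
    have hdesc := descent_lemma f g hdiff L hLip y p
    have hvi := hVI (y - α • g y) y hy
    -- rewrite VI: ‖y - p‖² ≤ α * ⟪g y, y - p⟫
    have hvi' : ‖y - p‖ ^ 2 ≤ α * ⟪g y, y - p⟫ := by
      have : ⟪(y - p) - α • g y, y - p⟫ ≤ 0 := by
        have he : y - α • g y - p = (y - p) - α • g y := by abel
        rwa [he] at hvi
      rw [inner_sub_left, real_inner_smul_left, real_inner_self_eq_norm_sq] at this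
      linarith
    have hnorm : ‖p - y‖ = ‖y - p‖ := by rw [← neg_sub, norm_neg]
    have h1 : ⟪g y, p - y⟫ = -⟪g y, y - p⟫ := by
      rw [← inner_neg_right]; congr 1; abel
    have hdesc' : f p ≤ f y + -⟪g y, y - p⟫ + L / 2 * ‖y - p‖ ^ 2 := by
      rw [hnorm, h1] at hdesc; exact hdesc
    have hPLy := hPL y hy
    have hGnorm : ‖α⁻¹ • (y - p)‖ ^ 2 = α⁻¹ ^ 2 * ‖y - p‖ ^ 2 := by
      rw [norm_smul, Real.norm_eq_abs, abs_of_pos (inv_pos.mpr hα), mul_pow]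
    have hPL' : κ * (f y - fstar) * α ^ 2 ≤ ‖y - p‖ ^ 2 := by
      rw [hGnorm] at hPLy
      have hα2 : (0:ℝ) < α ^ 2 := by positivity
      have := mul_le_mul_of_nonneg_right hPLy (le_of_lt hα2)
      calc κ * (f y - fstar) * α ^ 2 ≤ α⁻¹ ^ 2 * ‖y - p‖ ^ 2 * α ^ 2 := this
        _ = ‖y - p‖ ^ 2 := by field_simp
    have hαL1 : α * L ≤ 1 := (le_div_iff₀ hL).mp hαL
    have hcoef : (0:ℝ) ≤ 1 - α * L / 2 := by linarith
    have hstep : α * (f p - fstar) ≤ α * ((1 - α * (1 - α * L / 2) * κ) * (f y - fstar)) := by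
      nlinarith [mul_le_mul_of_nonneg_left hdesc' hα.le, hvi',
        mul_le_mul_of_nonneg_left hPL' hcoef]
    have := (mul_le_mul_iff_right₀ hα).mp hstep
    rw [hr]; exact this
  -- all iterates in C
  have hxC : ∀ k, x k ∈ C := by
    intro k
    cases k with
    | zero => exact hx0
    | succ n => rw [hiter n]; exact (hproj _).1
  have hnn : ∀ k, 0 ≤ f (x k) - fstar := fun k => sub_nonneg.mpr (hlb _ (hxC k))
  -- either r ≥ 0, or f is constant fstar on C
  by_cases hrpos : 0 ≤ r
  · intro k
    induction k with
    | zero => simp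
    | succ n ih =>
      have hstep : f (x (n + 1)) - fstar ≤ r * (f (x n) - fstar) := by
        rw [hiter n]; exact key (x n) (hxC n)
      calc f (x (n + 1)) - fstar ≤ r * (f (x n) - fstar) := hstep
        _ ≤ r * (r ^ n * (f (x 0) - fstar)) := mul_le_mul_of_nonneg_left ih hrpos
        _ = r ^ (n + 1) * (f (x 0) - fstar) := by ring
  · -- r < 0 : then f y = fstar for all y ∈ C
    have hconst : ∀ y ∈ C, f y - fstar = 0 := by
      intro y hy
      by_contra hne
      have hpos : 0 < f y - fstar := lt_of_le_of_ne (sub_nonneg.mpr (hlb y hy)) (Ne.symm hne)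
      have h1 := key y hy
      have h2 : 0 ≤ f (proj (y - α • g y)) - fstar := sub_nonneg.mpr (hlb _ (hproj _).1)
      nlinarith [not_le.mp hrpos]
    intro k
    rw [hconst (x k) (hxC k), hconst (x 0) hx0, mul_zero]
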